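/- Let n be a positive integer, λ_1,…,λ_n positive reals, τ > 0. For each integer k ≥ 1 let ω_k > 0 be the unique solution of Σ_{j=1}^{n} arctan(ω/λ_j) = (2k−1)π − ωτ, and set a_k = √(Π_{j=1}^{n}(ω_k² + λ_j²)). Then: (1) for a > 0 and ω > 0, the number z = iω is a root of (z+λ_1)⋯(z+λ_n) + a·e^{−τz} = 0 if and only if ω = ω_k and a = a_k for some integer k ≥ 1; (2) the sequence (a_k) is strictly increasing with a_k → ∞ as k → ∞; in particular, for each fixed a = a_k the equation has exactly one pair of purely imaginary roots, namely z = ±i·ω_k. -/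

import Mathlib

open Complex

lemma my_sqrt_prod {ι : Type*} (s : Finset ι) (f : ι → ℝ) (hf : ∀ i ∈ s, 0 ≤ f i) :
    Real.sqrt (∏ i ∈ s, f i) = ∏ i ∈ s, Real.sqrt (f i) := by
  induction s using Finset.cons_induction with
  | empty => simp
  | cons a s ha ih =>
    rw [Finset.prod_cons, Finset.prod_cons,
      Real.sqrt_mul (hf a (Finset.mem_cons_self a s)),
      ih (fun i hi => hf i (Finset.mem_cons_of_mem hi))]

lemma factor_eq (l w : ℝ) (hl : 0 < l) :
    (l : ℂ) + (w : ℂ) * Complex.I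
      = (Real.sqrt (w ^ 2 + l ^ 2) : ℂ)
        * Complex.exp ((Real.arctan (w / l) : ℂ) * Complex.I) := by
  have hs : Real.sqrt (1 + (w / l) ^ 2) = Real.sqrt (w ^ 2 + l ^ 2) / l := by
    have h1 : (1 : ℝ) + (w / l) ^ 2 = (w ^ 2 + l ^ 2) / l ^ 2 := by
      field_simp; ring
    rw [h1, Real.sqrt_div (by positivity), Real.sqrt_sq hl.le]
  have hR : (0 : ℝ) < Real.sqrt (w ^ 2 + l ^ 2) := Real.sqrt_pos.2 (by positivity)
  have hcos : Real.sqrt (w ^ 2 + l ^ 2) * Real.cos (Real.arctan (w / l)) = l := by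
    rw [Real.cos_arctan, hs]; field_simp
  have hsin : Real.sqrt (w ^ 2 + l ^ 2) * Real.sin (Real.arctan (w / l)) = w := by
    rw [Real.sin_arctan, hs]; field_simp
  rw [Complex.exp_mul_I, ← Complex.ofReal_cos, ← Complex.ofReal_sin]
  rw [show ((Real.sqrt (w ^ 2 + l ^ 2) : ℝ) : ℂ)
        * (((Real.cos (Real.arctan (w / l)) : ℝ) : ℂ)
          + ((Real.sin (Real.arctan (w / l)) : ℝ) : ℂ) * Complex.I)
      = ((Real.sqrt (w ^ 2 + l ^ 2) * Real.cos (Real.arctan (w / l)) : ℝ) : ℂ)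
        + ((Real.sqrt (w ^ 2 + l ^ 2) * Real.sin (Real.arctan (w / l)) : ℝ) : ℂ)
          * Complex.I by push_cast; ring]
  rw [hcos, hsin]

/-- Lemma 3 (i): with `ω_k` the unique positive solution of
`Σⱼ arctan(ω/λⱼ) = (2k-1)π - ωτ` and `a_k = √(Πⱼ(ω_k² + λⱼ²))`, the number `z = iω`
(`ω > 0`) is a root of `(z+λ₁)⋯(z+λₙ) + a e^{-τz} = 0` (`a > 0`) iff `ω = ω_k` and
`a = a_k` for some `k ≥ 1`; the sequence `(a_k)` is strictly increasing and tends
to infinity. In particular, for `a = a_k` the only purely imaginary roots are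
`±i ω_k`. -/
theorem purely_imaginary_roots
    (n : ℕ) (hn : 0 < n) (lam : Fin n → ℝ) (hlam : ∀ j, 0 < lam j)
    (τ : ℝ) (hτ : 0 < τ)
    (ω : ℕ → ℝ)
    (hω : ∀ k : ℕ, 1 ≤ k → 0 < ω k ∧
      (∑ j, Real.arctan (ω k / lam j)) = (2 * (k : ℝ) - 1) * Real.pi - ω k * τ)
    (hωuniq : ∀ k : ℕ, 1 ≤ k → ∀ w : ℝ, 0 < w →
      (∑ j, Real.arctan (w / lam j)) = (2 * (k : ℝ) - 1) * Real.pi - w * τ → w = ω k)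
    (A : ℕ → ℝ)
    (hA : ∀ k : ℕ, A k = Real.sqrt (∏ j, (ω k ^ 2 + lam j ^ 2))) :
    (∀ a : ℝ, 0 < a → ∀ w : ℝ, 0 < w →
      ((∏ j, (Complex.I * (w : ℂ) + (lam j : ℂ)))
          + (a : ℂ) * Complex.exp (-(τ : ℂ) * (Complex.I * (w : ℂ))) = 0
        ↔ ∃ k : ℕ, 1 ≤ k ∧ w = ω k ∧ a = A k)) ∧
    StrictMonoOn A (Set.Ici 1) ∧
    Filter.Tendsto A Filter.atTop Filter.atTop := by
  haveI : Nonempty (Fin n) := ⟨⟨0, hn⟩⟩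
  have hπ := Real.pi_pos
  -- positivity of the angle sum
  have hΘpos : ∀ w : ℝ, 0 < w → 0 < ∑ j, Real.arctan (w / lam j) := by
    intro w hw
    exact Finset.sum_pos (fun j _ => (by simpa using Real.arctan_strictMono (div_pos hw (hlam j))))
      Finset.univ_nonempty
  -- positivity of R
  have hRpos : ∀ w : ℝ, 0 < Real.sqrt (∏ j, (w ^ 2 + lam j ^ 2)) := by
    intro w
    exact Real.sqrt_pos.2 (Finset.prod_pos (fun j _ => by have := hlam j; positivity))
  -- the product in polar form
  have hprod : ∀ w : ℝ, (∏ j, (Complex.I * (w : ℂ) + (lam j : ℂ)))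
      = ((Real.sqrt (∏ j, (w ^ 2 + lam j ^ 2)) : ℝ) : ℂ)
        * Complex.exp (((∑ j, Real.arctan (w / lam j) : ℝ) : ℂ) * Complex.I) := by
    intro w
    have h1 : ∀ j : Fin n, Complex.I * (w : ℂ) + (lam j : ℂ)
        = (Real.sqrt (w ^ 2 + lam j ^ 2) : ℂ)
          * Complex.exp ((Real.arctan (w / lam j) : ℂ) * Complex.I) := by
      intro j
      rw [← factor_eq (lam j) w (hlam j)]; ring
    rw [Finset.prod_congr rfl (fun j _ => h1 j), Finset.prod_mul_distrib,
      ← Complex.exp_sum, ← Complex.ofReal_prod,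
      my_sqrt_prod _ _ (fun (j : Fin n) _ => by have := hlam j; positivity),
      ← Finset.sum_mul, ← Complex.ofReal_sum]
  -- rewriting of the exponent
  have hexp : ∀ w : ℝ, -(τ : ℂ) * (Complex.I * (w : ℂ)) = ((-(τ * w) : ℝ) : ℂ) * Complex.I := by
    intro w; push_cast; ring
  -- the main equivalence
  have main : ∀ a : ℝ, 0 < a → ∀ w : ℝ, 0 < w →
      ((∏ j, (Complex.I * (w : ℂ) + (lam j : ℂ)))
          + (a : ℂ) * Complex.exp (-(τ : ℂ) * (Complex.I * (w : ℂ))) = 0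
        ↔ ∃ k : ℕ, 1 ≤ k ∧ w = ω k ∧ a = A k) := by
    intro a ha w hw
    rw [hprod w, hexp w]
    constructor
    · intro heq
      set Θ : ℝ := ∑ j, Real.arctan (w / lam j) with hΘdef
      set R : ℝ := Real.sqrt (∏ j, (w ^ 2 + lam j ^ 2)) with hRdef
      have h3 : (R : ℂ) * Complex.exp ((Θ : ℂ) * Complex.I)
          = -((a : ℂ) * Complex.exp (((-(τ * w) : ℝ) : ℂ) * Complex.I)) := by
        linear_combination heq
      have habs := congrArg (fun z : ℂ => ‖z‖) h3
      simp only [norm_mul, norm_neg, Complex.norm_exp_ofReal_mul_I, mul_one,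
        Complex.norm_real, Real.norm_eq_abs] at habs
      rw [_root_.abs_of_nonneg (Real.sqrt_nonneg _), _root_.abs_of_pos ha] at habs
      -- habs : R = a
      have hRne : (R : ℂ) ≠ 0 := by
        exact_mod_cast ne_of_gt (hRpos w)
      have h4 : Complex.exp ((Θ : ℂ) * Complex.I)
          = -Complex.exp (((-(τ * w) : ℝ) : ℂ) * Complex.I) := by
        apply mul_left_cancel₀ hRne
        rw [h3, ← habs, hRdef]; ring
      have h5 : Complex.exp ((Θ : ℂ) * Complex.I)
          = Complex.exp ((Real.pi : ℂ) * Complex.I + ((-(τ * w) : ℝ) : ℂ) * Complex.I) := by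
        rw [Complex.exp_add, Complex.exp_pi_mul_I, h4]; ring
      obtain ⟨m, hm⟩ := Complex.exp_eq_exp_iff_exists_int.1 h5
      have hm' : Θ = Real.pi + (-(τ * w)) + m * (2 * Real.pi) := by
        have him := congrArg Complex.im hm
        simpa using him
      have hΘposw := hΘpos w hw
      have hmpos : 0 ≤ m := by
        by_contra hcon
        push_neg at hcon
        have hm1 : (m : ℝ) ≤ -1 := by
          have : m ≤ -1 := by omega
          exact_mod_cast this
        nlinarith [mul_pos hτ hw]
      refine ⟨m.toNat + 1, Nat.le_add_left 1 _, ?_, ?_⟩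
      · apply hωuniq (m.toNat + 1) (Nat.le_add_left 1 _) w hw
        have hcast : (2 * ((m.toNat + 1 : ℕ) : ℝ) - 1) = 2 * (m : ℝ) + 1 := by
          have htn : ((m.toNat : ℕ) : ℝ) = (m : ℝ) := by
            exact_mod_cast Int.toNat_of_nonneg hmpos
          push_cast [htn]; ring
        rw [hcast]
        linear_combination hm'
      · have hwk : w = ω (m.toNat + 1) := by
          apply hωuniq (m.toNat + 1) (Nat.le_add_left 1 _) w hw
          have hcast : (2 * ((m.toNat + 1 : ℕ) : ℝ) - 1) = 2 * (m : ℝ) + 1 := by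
            have htn : ((m.toNat : ℕ) : ℝ) = (m : ℝ) := by
              exact_mod_cast Int.toNat_of_nonneg hmpos
            push_cast [htn]; ring
          rw [hcast]
          linear_combination hm'
        rw [hA, ← hwk, ← habs]
    · rintro ⟨k, hk, hwk, hak⟩
      subst hwk; subst hak
      obtain ⟨hωpos, hΘeq⟩ := hω k hk
      rw [hA k]
      have hodd : Complex.exp ((((2 * (k : ℝ) - 1) * Real.pi : ℝ) : ℂ) * Complex.I) = -1 := by
        have h2k : ((2 * k - 1 : ℕ) : ℝ) = 2 * (k : ℝ) - 1 := by
          push_cast [Nat.cast_sub (by omega : 1 ≤ 2 * k)]; ring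
        rw [← h2k]
        push_cast
        rw [show ((2 * k - 1 : ℕ) : ℂ) * (Real.pi : ℂ) * Complex.I
            = ((2 * k - 1 : ℕ) : ℂ) * ((Real.pi : ℂ) * Complex.I) by ring,
          Complex.exp_nat_mul, Complex.exp_pi_mul_I]
        exact Odd.neg_one_pow ⟨k - 1, by omega⟩
      have hsplit : (((∑ j, Real.arctan (ω k / lam j) : ℝ)) : ℂ) * Complex.I
          = (((2 * (k : ℝ) - 1) * Real.pi : ℝ) : ℂ) * Complex.I
            + ((-(τ * ω k) : ℝ) : ℂ) * Complex.I := by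
        rw [hΘeq]; push_cast; ring
      rw [hsplit, Complex.exp_add, hodd]
      ring
  refine ⟨main, ?_, ?_⟩
  · -- strict monotonicity
    have hf : StrictMono (fun x : ℝ => (∑ j, Real.arctan (x / lam j)) + τ * x) := by
      have h1 : Monotone (fun x : ℝ => ∑ j, Real.arctan (x / lam j)) := by
        intro x y hxy
        exact Finset.sum_le_sum (fun j _ =>
          Real.arctan_strictMono.monotone (by gcongr; exact (hlam j).le))
      have h2 : StrictMono (fun x : ℝ => τ * x) :=
        fun x y hxy => mul_lt_mul_of_pos_left hxy hτ
      exact h1.add_strictMono h2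
    have hωlt : ∀ k l : ℕ, 1 ≤ k → k < l → ω k < ω l := by
      intro k l hk hkl
      have hl : 1 ≤ l := hk.trans hkl.le
      obtain ⟨hk0, hkeq⟩ := hω k hk
      obtain ⟨hl0, hleq⟩ := hω l hl
      have hkl' : (k : ℝ) < l := by exact_mod_cast hkl
      have h1 : (∑ j, Real.arctan (ω k / lam j)) + τ * ω k
          < (∑ j, Real.arctan (ω l / lam j)) + τ * ω l := by
        rw [hkeq, hleq]; nlinarith
      exact hf.lt_iff_lt.mp h1
    intro k hk l hl hkl
    simp only [Set.mem_Ici] at hk hl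
    rw [hA k, hA l]
    apply Real.sqrt_lt_sqrt (Finset.prod_nonneg (fun j _ => by have := hlam j; positivity))
    apply Finset.prod_lt_prod_of_nonempty
      (fun j _ => by have := hlam j; positivity)
      (fun j _ => by
        have h := hωlt k l hk hkl
        have hk0 := (hω k hk).1
        nlinarith)
      Finset.univ_nonempty
  · -- tendsto
    have hωge : ∀ k : ℕ, 1 ≤ k →
        ((2 * (k : ℝ) - 1) * Real.pi - n * (Real.pi / 2)) / τ ≤ ω k := by
      intro k hk
      obtain ⟨h0, heq⟩ := hω k hk
      have hub : (∑ j, Real.arctan (ω k / lam j)) ≤ n * (Real.pi / 2) := by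
        calc (∑ j, Real.arctan (ω k / lam j)) ≤ ∑ _j : Fin n, Real.pi / 2 :=
              Finset.sum_le_sum (fun j _ => (Real.arctan_lt_pi_div_two _).le)
          _ = n * (Real.pi / 2) := by
              rw [Finset.sum_const, Finset.card_univ, Fintype.card_fin, nsmul_eq_mul]
      rw [div_le_iff₀ hτ]
      nlinarith
    have hgt : Filter.Tendsto
        (fun k : ℕ => ((2 * (k : ℝ) - 1) * Real.pi - n * (Real.pi / 2)) / τ)
        Filter.atTop Filter.atTop := by
      apply Filter.Tendsto.atTop_div_const hτ
      have h2 : Filter.Tendsto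
          (fun k : ℕ => (k : ℝ) * (2 * Real.pi) + (-Real.pi - n * (Real.pi / 2)))
          Filter.atTop Filter.atTop :=
        Filter.tendsto_atTop_add_const_right _ _
          (Filter.Tendsto.atTop_mul_const (by positivity)
            (tendsto_natCast_atTop_atTop (R := ℝ)))
      exact h2.congr (fun k => by ring)
    have hωtend : Filter.Tendsto ω Filter.atTop Filter.atTop := by
      apply Filter.tendsto_atTop_mono' Filter.atTop ?_ hgt
      filter_upwards [Filter.eventually_ge_atTop 1] with k hk
      exact hωge k hk
    apply Filter.tendsto_atTop_mono' Filter.atTop ?_ hωtend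
    filter_upwards [Filter.eventually_ge_atTop 1, hωtend.eventually_ge_atTop 1] with k hk1 hωk1
    have h0 : 0 < ω k := (hω k hk1).1
    rw [hA k]
    have h1 : (ω k) ^ (2 * n) ≤ ∏ j, (ω k ^ 2 + lam j ^ 2) := by
      calc (ω k) ^ (2 * n) = ∏ _j : Fin n, (ω k) ^ 2 := by
            rw [Finset.prod_const, Finset.card_univ, Fintype.card_fin, ← pow_mul]
        _ ≤ ∏ j, (ω k ^ 2 + lam j ^ 2) :=
            Finset.prod_le_prod (fun j _ => by positivity)
              (fun j _ => by nlinarith [hlam j])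
    calc ω k ≤ (ω k) ^ n := le_self_pow₀ hωk1 (by omega)
      _ = Real.sqrt ((ω k) ^ (2 * n)) := by
          rw [mul_comm 2 n, pow_mul, Real.sqrt_sq (by positivity)]
      _ ≤ Real.sqrt (∏ j, (ω k ^ 2 + lam j ^ 2)) := Real.sqrt_le_sqrt h1
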